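/- Let f be a sense-preserving harmonic mapping on the unit disk D. Then the function A_f(z) = ((1-|z|²)/2)·P_f(z) - conj(z) does not vanish identically on D. (Equivalently: there is no constant k > 0 with (1-|z|²)·J_f(z)^{1/2} = k for all z in D.) -/

import Mathlib

open Complex Metric Set

noncomputable section

/-- The open unit disk in ℂ. -/
def 𝔻 : Set ℂ := Metric.ball (0 : ℂ) 1

/-- Dilatation ω = g'/h' of a harmonic mapping f = h + conj g. -/
def dil (h g : ℂ → ℂ) (z : ℂ) : ℂ := deriv g z / deriv h z

/-- Harmonic pre-Schwarzian P_f = h''/h' - conj(ω)·ω'/(1-|ω|²). -/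
def Pf (h g : ℂ → ℂ) (z : ℂ) : ℂ :=
  deriv (deriv h) z / deriv h z -
    (starRingEnd ℂ) (dil h g z) * deriv (dil h g) z /
      (((1 - ‖dil h g z‖ ^ 2 : ℝ) : ℂ))

/-- The operator A_f(z) = ((1-|z|²)/2)·P_f(z) - conj z. -/
def Af (h g : ℂ → ℂ) (z : ℂ) : ℂ :=
  (((1 - ‖z‖ ^ 2 : ℝ) : ℂ)) / 2 * Pf h g z - (starRingEnd ℂ) z

/-- The operator A_φ for an analytic φ. -/
def Aan (φ : ℂ → ℂ) (z : ℂ) : ℂ :=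
  (((1 - ‖z‖ ^ 2 : ℝ) : ℂ)) / 2 * (deriv (deriv φ) z / deriv φ z) -
    (starRingEnd ℂ) z

/-- Jacobian J_f = |h'|² - |g'|². -/
def Jf (h g : ℂ → ℂ) (z : ℂ) : ℝ :=
  ‖deriv h z‖ ^ 2 - ‖deriv g z‖ ^ 2

/-- f = h + conj g is a sense-preserving harmonic mapping on 𝔻. -/
def SensePreserving (h g : ℂ → ℂ) : Prop :=
  (∀ z ∈ 𝔻, AnalyticAt ℂ h z) ∧ (∀ z ∈ 𝔻, AnalyticAt ℂ g z) ∧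
  (∀ z ∈ 𝔻, deriv h z ≠ 0) ∧ (∀ z ∈ 𝔻, ‖dil h g z‖ < 1)

/-- Hyperbolic (Poincaré) distance on 𝔻, with density 1/(1-|z|²). -/
def hypDist (z w : ℂ) : ℝ :=
  (1 / 2) * Real.log
    ((1 + ‖(z - w) / (1 - (starRingEnd ℂ) w * z)‖) /
     (1 - ‖(z - w) / (1 - (starRingEnd ℂ) w * z)‖))

/-- Wirtinger derivative ∂_z of a real-valued function. -/
def wirtinger (u : ℂ → ℝ) (z : ℂ) : ℂ :=
  ((fderiv ℝ u z 1 : ℝ) : ℂ) / 2 - Complex.I * ((fderiv ℝ u z Complex.I : ℝ) : ℂ) / 2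

open scoped RealInnerProductSpace

lemma mem_disk {z : ℂ} (hz : z ∈ 𝔻) : ‖z‖ < 1 := by
  simpa [𝔻, Metric.mem_ball, Complex.dist_eq] using hz

lemma analyticAt_deriv {f : ℂ → ℂ} {z : ℂ} (hf : AnalyticAt ℂ f z) :
    AnalyticAt ℂ (deriv f) z := by
  have h1 := ((ContinuousLinearMap.apply ℂ ℂ (1:ℂ)).analyticAt (fderiv ℂ f z)).comp hf.fderiv
  exact h1

lemma Jf_pos {h g : ℂ → ℂ} (hf : SensePreserving h g) {z : ℂ} (hz : z ∈ 𝔻) :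
    0 < Jf h g z := by
  obtain ⟨hh, hga, hh', hw⟩ := hf
  have ha : deriv h z ≠ 0 := hh' z hz
  have hapos : 0 < ‖deriv h z‖ := norm_pos_iff.mpr ha
  have h1 : ‖dil h g z‖ < 1 := hw z hz
  have h2 : ‖deriv g z‖ < ‖deriv h z‖ := by
    have : ‖deriv g z‖ / ‖deriv h z‖ < 1 := by
      simpa [dil, map_div₀] using h1
    exact (div_lt_one hapos).mp this
  have h3 := norm_nonneg (deriv g z)
  unfold Jf; nlinarith

/-- the auxiliary function (1-|z|²)² J_f -/
def uu (h g : ℂ → ℂ) (w : ℂ) : ℝ := (1 - ‖w‖ ^ 2) ^ 2 * Jf h g w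

lemma uu_eq (h g : ℂ → ℂ) : uu h g = fun w =>
    ((1 - ⟪w, w⟫) * (1 - ⟪w, w⟫)) *
      (⟪deriv h w, deriv h w⟫ - ⟪deriv g w, deriv g w⟫) := by
  funext w
  simp only [uu, Jf, real_inner_self_eq_norm_sq]
  ring

lemma key_deriv (h g : ℂ → ℂ) (hf : SensePreserving h g)
    (H : ∀ z ∈ 𝔻, Af h g z = 0) {z : ℂ} (hz : z ∈ 𝔻) :
    HasFDerivAt (uu h g) (0 : ℂ →L[ℝ] ℝ) z := by
  obtain ⟨hh, hga, hh', hw⟩ := hf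
  set a := deriv h z with ha_def
  set a' := deriv (deriv h) z with ha'_def
  set b := deriv g z with hb_def
  set b' := deriv (deriv g) z with hb'_def
  have ha : a ≠ 0 := hh' z hz
  have Ha : HasDerivAt (deriv h) a' z :=
    (analyticAt_deriv (hh z hz)).differentiableAt.hasDerivAt
  have Hb : HasDerivAt (deriv g) b' z :=
    (analyticAt_deriv (hga z hz)).differentiableAt.hasDerivAt
  -- the dilatation and its derivative
  set ω := dil h g z with hω_def
  have hωv : ω = b / a := rfl
  have Hdil : HasDerivAt (dil h g) ((b' * a - b * a') / a ^ 2) z := by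
    exact Hb.div Ha ha
  have hderiv_dil : deriv (dil h g) z = (b' * a - b * a') / a ^ 2 := Hdil.deriv
  have hω1 : ‖ω‖ < 1 := hw z hz
  have hcast : ((1 - ‖ω‖ ^ 2 : ℝ) : ℂ) = 1 - ω * (starRingEnd ℂ) ω := by
    rw [Complex.mul_conj, ← Complex.sq_norm]; push_cast; ring
  have hden : ((1 - ‖ω‖ ^ 2 : ℝ) : ℂ) ≠ 0 := by
    have h0 := norm_nonneg ω
    have : (0:ℝ) < 1 - ‖ω‖ ^ 2 := by nlinarith
    exact_mod_cast ne_of_gt this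
  -- the Jacobian
  set J : ℝ := Jf h g z with hJ_def
  have hJpos : 0 < J := Jf_pos ⟨hh, hga, hh', hw⟩ hz
  have hJc : (J : ℂ) = a * (starRingEnd ℂ) a - b * (starRingEnd ℂ) b := by
    rw [hJ_def]
    unfold Jf
    rw [← ha_def, ← hb_def, Complex.sq_norm, Complex.sq_norm, Complex.ofReal_sub,
      Complex.mul_conj, Complex.mul_conj]
  have hca : (starRingEnd ℂ) a ≠ 0 := by
    simpa [map_eq_zero] using ha
  -- key algebraic identity : J * Pf = conj a * a' - conj b * b'
  have hDne : a * (starRingEnd ℂ) a - b * (starRingEnd ℂ) b ≠ 0 := by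
    rw [← hJc]
    exact Complex.ofReal_ne_zero.mpr (ne_of_gt hJpos)
  have hCden : ((1 - ‖ω‖ ^ 2 : ℝ) : ℂ) =
      (a * (starRingEnd ℂ) a - b * (starRingEnd ℂ) b) / (a * (starRingEnd ℂ) a) := by
    rw [hcast, hωv, map_div₀]
    field_simp
  have keyC : (J : ℂ) * Pf h g z = (starRingEnd ℂ) a * a' - (starRingEnd ℂ) b * b' := by
    unfold Pf
    rw [hderiv_dil, ← ha'_def, ← ha_def, ← hω_def, hCden, hJc, hωv, map_div₀]
    rw [div_div_eq_mul_div]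
    have hN : a * ((starRingEnd ℂ) a * a ^ 2 *
        (a * (starRingEnd ℂ) a - b * (starRingEnd ℂ) b)) ≠ 0 :=
      mul_ne_zero ha (mul_ne_zero (mul_ne_zero hca (pow_ne_zero 2 ha)) hDne)
    field_simp
    ring
  -- the hypothesis A_f = 0 at z
  set sC : ℂ := ((1 - ‖z‖ ^ 2 : ℝ) : ℂ) with hsC
  have hconjz : sC / 2 * Pf h g z = (starRingEnd ℂ) z := by
    have := H z hz
    unfold Af at this
    exact sub_eq_zero.mp this
  have keyz : (J : ℂ) * (starRingEnd ℂ) z = sC / 2 *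
      ((starRingEnd ℂ) a * a' - (starRingEnd ℂ) b * b') := by
    rw [← keyC, ← hconjz]; ring
  -- the vanishing complex coefficient
  set X : ℂ := (starRingEnd ℂ) a * a' - (starRingEnd ℂ) b * b' with hX
  have hC : 2 * sC * sC * X - 4 * sC * (J : ℂ) * (starRingEnd ℂ) z = 0 := by
    linear_combination (-4 * sC) * keyz
  -- now assemble the derivative
  rw [uu_eq]
  have Hid : HasFDerivAt (fun w : ℂ => w) (ContinuousLinearMap.id ℝ ℂ) z := hasFDerivAt_id z
  have h1 : HasFDerivAt (fun w : ℂ => ⟪w, w⟫)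
      ((fderivInnerCLM ℝ (z, z)).comp
        ((ContinuousLinearMap.id ℝ ℂ).prod (ContinuousLinearMap.id ℝ ℂ))) z :=
    Hid.inner ℝ Hid
  have HS : HasFDerivAt (fun w : ℂ => 1 - ⟪w, w⟫)
      (0 - (fderivInnerCLM ℝ (z, z)).comp
        ((ContinuousLinearMap.id ℝ ℂ).prod (ContinuousLinearMap.id ℝ ℂ))) z :=
    (hasFDerivAt_const (1:ℝ) z).sub h1
  have HA := HS.mul HS
  have FaC := (Ha.hasFDerivAt).restrictScalars ℝ
  have FbC := (Hb.hasFDerivAt).restrictScalars ℝ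
  have Hha := FaC.inner ℝ FaC
  have Hgb := FbC.inner ℝ FbC
  have HB := Hha.sub Hgb
  have HU := HA.mul HB
  refine HU.congr_fderiv ?_
  apply ContinuousLinearMap.ext
  intro v
  have key0 : ((2 * sC * sC * X - 4 * sC * (J : ℂ) * (starRingEnd ℂ) z) * v).re = 0 := by
    rw [hC]; simp
  rw [show ((0 : ℂ →L[ℝ] ℝ)) v = (0:ℝ) from rfl, ← key0]
  simp only [ContinuousLinearMap.add_apply, ContinuousLinearMap.smul_apply,
    ContinuousLinearMap.comp_apply, ContinuousLinearMap.prod_apply,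
    fderivInnerCLM_apply, ContinuousLinearMap.sub_apply, ContinuousLinearMap.zero_apply,
    ContinuousLinearMap.coe_restrictScalars', ContinuousLinearMap.smulRight_apply,
    ContinuousLinearMap.one_apply, ContinuousLinearMap.coe_id', id_eq, smul_eq_mul,
    Complex.inner, Complex.real_smul, ContinuousLinearMap.toSpanSingleton_apply]
  rw [hX, hsC, hJc]
  simp only [Complex.mul_re, Complex.mul_im, Complex.sub_re, Complex.sub_im,
    Complex.add_re, Complex.add_im, Complex.ofReal_re, Complex.ofReal_im,
    Complex.conj_re, Complex.conj_im, Complex.re_ofNat, Complex.im_ofNat,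
    Complex.one_re, Complex.one_im, Pi.mul_apply, Pi.sub_apply]
  have habs : ‖z‖ ^ 2 = z.re * z.re + z.im * z.im := by
    rw [Complex.sq_norm, Complex.normSq_apply]
  have habsa : ‖a‖ ^ 2 = a.re * a.re + a.im * a.im := by
    rw [Complex.sq_norm, Complex.normSq_apply]
  have habsb : ‖b‖ ^ 2 = b.re * b.re + b.im * b.im := by
    rw [Complex.sq_norm, Complex.normSq_apply]
  simp only [← ha_def, ← hb_def]
  rw [habs]
  ring

lemma mem_disk' {z : ℂ} (hz : ‖z‖ < 1) : z ∈ 𝔻 := by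
  simpa [𝔻, Metric.mem_ball, Complex.dist_eq] using hz

lemma part2 (h g : ℂ → ℂ) (hf : SensePreserving h g) :
    ¬ ∃ k : ℝ, 0 < k ∧ ∀ z ∈ 𝔻, (1 - ‖z‖ ^ 2) * Real.sqrt (Jf h g z) = k := by
  rintro ⟨k, hk, hEq⟩
  obtain ⟨hh, hga, hh', hw⟩ := hf
  set φ : ℂ → ℂ := fun z => (deriv h z)⁻¹ with hφ
  have hbound : ∀ z ∈ 𝔻, ‖φ z‖ ≤ (1 - ‖z‖ ^ 2) / k := by
    intro z hz
    have h2 : 0 < 1 - ‖z‖ ^ 2 := by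
      have := mem_disk hz
      have h0 := norm_nonneg z
      nlinarith
    have h1 : Real.sqrt (Jf h g z) ≤ ‖deriv h z‖ := by
      have hle : Jf h g z ≤ ‖deriv h z‖ ^ 2 := by
        have := sq_nonneg (‖deriv g z‖); unfold Jf; nlinarith
      calc Real.sqrt (Jf h g z) ≤ Real.sqrt (‖deriv h z‖ ^ 2) :=
            Real.sqrt_le_sqrt hle
        _ = ‖deriv h z‖ := Real.sqrt_sq (norm_nonneg _)
    have h3 : k ≤ (1 - ‖z‖ ^ 2) * ‖deriv h z‖ := by
      rw [← hEq z hz]; exact mul_le_mul_of_nonneg_left h1 h2.le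
    have hapos : 0 < ‖deriv h z‖ := norm_pos_iff.mpr (hh' z hz)
    have h4 : k / (1 - ‖z‖ ^ 2) ≤ ‖deriv h z‖ :=
      (div_le_iff₀ h2).mpr (by linarith [h3])
    rw [hφ]
    simp only [norm_inv]
    calc (‖deriv h z‖)⁻¹ ≤ (k / (1 - ‖z‖ ^ 2))⁻¹ :=
          inv_anti₀ (div_pos hk h2) h4
      _ = (1 - ‖z‖ ^ 2) / k := by rw [inv_div]
  have hφ0 : 0 < ‖φ 0‖ := by
    have h0 : (0:ℂ) ∈ 𝔻 := by simp [𝔻]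
    have : deriv h 0 ≠ 0 := hh' 0 h0
    simpa [hφ, norm_pos_iff] using inv_ne_zero this
  set m : ℝ := k * ‖φ 0‖ with hm
  have hm0 : 0 < m := mul_pos hk hφ0
  set r : ℝ := max (1/2) (Real.sqrt (1 - m/2)) with hr
  have hr0 : 0 < r := lt_of_lt_of_le (by norm_num) (le_max_left _ _)
  have hr1 : r < 1 := by
    apply max_lt (by norm_num)
    rw [Real.sqrt_lt' one_pos]
    nlinarith
  have hr2 : 1 - r ^ 2 < m := by
    rcases le_or_gt (1 - m/2) 0 with h0 | h0
    · have : (1/2:ℝ) ≤ r := le_max_left _ _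
      nlinarith
    · have hle : Real.sqrt (1 - m/2) ≤ r := le_max_right _ _
      have h4 : 1 - m/2 ≤ r ^ 2 := by
        nlinarith [Real.sq_sqrt h0.le, Real.sqrt_nonneg (1 - m/2)]
      nlinarith
  have hsub : closedBall (0:ℂ) r ⊆ 𝔻 := closedBall_subset_ball hr1
  have hdiff : DiffContOnCl ℂ φ (ball 0 r) := by
    apply DifferentiableOn.diffContOnCl
    intro z hz
    rw [closure_ball (0:ℂ) (ne_of_gt hr0)] at hz
    have hz' : z ∈ 𝔻 := hsub hz
    exact ((analyticAt_deriv (hh z hz')).differentiableAt.inv (hh' z hz')).differentiableWithinAt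
  have hmax : ‖φ 0‖ ≤ (1 - r ^ 2) / k := by
    apply Complex.norm_le_of_forall_mem_frontier_norm_le isBounded_ball hdiff
    · intro z hz
      rw [frontier_ball (0:ℂ) (ne_of_gt hr0)] at hz
      have habs : ‖z‖ = r := by
        simpa [Complex.dist_eq] using hz
      have hz' : z ∈ 𝔻 := mem_disk' (by rw [habs]; exact hr1)
      calc ‖φ z‖ ≤ (1 - ‖z‖ ^ 2) / k := hbound z hz'
        _ = (1 - r ^ 2) / k := by rw [habs]
    · rw [closure_ball (0:ℂ) (ne_of_gt hr0)]
      simp [hr0.le]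
  have hlt : (1 - r ^ 2) / k < ‖φ 0‖ := by
    rw [div_lt_iff₀ hk]
    calc 1 - r ^ 2 < m := hr2
      _ = ‖φ 0‖ * k := by rw [hm]; ring
  exact absurd (lt_of_le_of_lt hmax hlt) (lt_irrefl _)

lemma part1 (h g : ℂ → ℂ) (hf : SensePreserving h g)
    (H : ∀ z ∈ 𝔻, Af h g z = 0) : False := by
  have h0 : (0:ℂ) ∈ 𝔻 := by simp [𝔻]
  have hconst : ∀ z ∈ 𝔻, uu h g z = uu h g 0 := by
    intro z hz
    refine (convex_ball (0:ℂ) 1).is_const_of_fderivWithin_eq_zero (𝕜 := ℝ)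
      (f := uu h g) ?_ ?_ hz h0
    · intro w hw'
      exact ((key_deriv h g hf H hw').differentiableAt).differentiableWithinAt
    · intro w hw'
      rw [fderivWithin_of_isOpen isOpen_ball hw']
      exact (key_deriv h g hf H hw').fderiv
  refine part2 h g hf ⟨Real.sqrt (Jf h g 0), ?_, ?_⟩
  · exact Real.sqrt_pos.mpr (Jf_pos hf h0)
  · intro z hz
    have h1 : (0:ℝ) ≤ 1 - ‖z‖ ^ 2 := by
      have := mem_disk hz
      have h2 := norm_nonneg z
      nlinarith
    have h3 : (1 - ‖z‖ ^ 2) * Real.sqrt (Jf h g z)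
        = Real.sqrt ((1 - ‖z‖ ^ 2) ^ 2 * Jf h g z) := by
      rw [Real.sqrt_mul (sq_nonneg _), Real.sqrt_sq h1]
    rw [h3]
    have h4 := hconst z hz
    unfold uu at h4
    rw [h4]
    norm_num

/-- A_f does not vanish identically on 𝔻; equivalently there is no
constant k > 0 with (1-|z|²)·J_f(z)^{1/2} = k on 𝔻. -/
theorem stmt_2 (h g : ℂ → ℂ) (hf : SensePreserving h g) :
    (¬ ∀ z ∈ 𝔻, Af h g z = 0) ∧
    (¬ ∃ k : ℝ, 0 < k ∧ ∀ z ∈ 𝔻, (1 - ‖z‖ ^ 2) * Real.sqrt (Jf h g z) = k) := by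
  exact ⟨fun H => part1 h g hf H, part2 h g hf⟩
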